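/- Let t₀ ∈ ℂ and let (a, b, c) ∈ ℂ³. Set r = |a| + |b| + |c| and R = 1 / (104 + 8 r). Then there exist functions x, y, z : ℂ → ℂ that are complex-differentiable on the open ball of radius R centered at t₀, satisfy the complex Lorenz system there, and satisfy x(t₀) = a, y(t₀) = b, z(t₀) = c. -/

import Mathlib

/-- The complex Lorenz system holds for `(x, y, z)` on the set `U`. -/
def LorenzSystemC (x y z : ℂ → ℂ) (U : Set ℂ) : Prop :=
  ∀ t ∈ U,
    HasDerivAt x (10 * (y t - x t)) t ∧
    HasDerivAt y (28 * x t - y t - x t * z t) t ∧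
    HasDerivAt z (-(8 / 3) * z t + x t * y t) t

open Finset

noncomputable def co (a b c : ℂ) : ℕ → ℂ × ℂ × ℂ
  | 0 => (a, b, c)
  | (n + 1) =>
    ((10 * ((co a b c n).2.1 - (co a b c n).1)) / ((n : ℂ) + 1),
     (28 * (co a b c n).1 - (co a b c n).2.1 -
        ∑ p ∈ (antidiagonal n).attach,
          (co a b c p.1.1).1 * (co a b c p.1.2).2.2) / ((n : ℂ) + 1),
     ((-(8 / 3)) * (co a b c n).2.2 +
        ∑ p ∈ (antidiagonal n).attach,
          (co a b c p.1.1).1 * (co a b c p.1.2).2.1) / ((n : ℂ) + 1))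
  decreasing_by
    all_goals first
      | exact Nat.lt_succ_self n
      | (have := Finset.HasAntidiagonal.mem_antidiagonal.mp p.2; omega)

variable (a b c : ℂ)

lemma co_X_succ (n : ℕ) :
    ((n : ℂ) + 1) * (co a b c (n+1)).1 =
      10 * ((co a b c n).2.1 - (co a b c n).1) := by
  rw [co, mul_div_cancel₀ _ (Nat.cast_add_one_ne_zero n)]

lemma co_Y_succ (n : ℕ) :
    ((n : ℂ) + 1) * (co a b c (n+1)).2.1 =
      28 * (co a b c n).1 - (co a b c n).2.1 -
        ∑ p ∈ antidiagonal n, (co a b c p.1).1 * (co a b c p.2).2.2 := by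
  rw [co]
  show ((n : ℂ) + 1) * (_ / ((n : ℂ) + 1)) = _
  rw [mul_div_cancel₀ _ (Nat.cast_add_one_ne_zero n),
    ← Finset.sum_attach (antidiagonal n) (fun p => (co a b c p.1).1 * (co a b c p.2).2.2)]

lemma co_Z_succ (n : ℕ) :
    ((n : ℂ) + 1) * (co a b c (n+1)).2.2 =
      (-(8 / 3)) * (co a b c n).2.2 +
        ∑ p ∈ antidiagonal n, (co a b c p.1).1 * (co a b c p.2).2.1 := by
  rw [co]
  show ((n : ℂ) + 1) * (_ / ((n : ℂ) + 1)) = _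
  rw [mul_div_cancel₀ _ (Nat.cast_add_one_ne_zero n),
    ← Finset.sum_attach (antidiagonal n) (fun p => (co a b c p.1).1 * (co a b c p.2).2.1)]

set_option maxHeartbeats 1600000 in
lemma co_bound : ∀ n : ℕ,
    ‖(co a b c n).1‖ ≤ (‖a‖ + ‖b‖ + ‖c‖ + 1) * (104 + 8 * (‖a‖ + ‖b‖ + ‖c‖)) ^ n ∧
    ‖(co a b c n).2.1‖ ≤ (‖a‖ + ‖b‖ + ‖c‖ + 1) * (104 + 8 * (‖a‖ + ‖b‖ + ‖c‖)) ^ n ∧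
    ‖(co a b c n).2.2‖ ≤ (‖a‖ + ‖b‖ + ‖c‖ + 1) * (104 + 8 * (‖a‖ + ‖b‖ + ‖c‖)) ^ n := by
  set r : ℝ := ‖a‖ + ‖b‖ + ‖c‖ with hr
  have hr0 : 0 ≤ r := by positivity
  set A : ℝ := r + 1 with hA
  set B : ℝ := 104 + 8 * r with hB
  have hA1 : 1 ≤ A := by simp [hA]; linarith
  have hA0 : 0 < A := by linarith
  have hB0 : 0 < B := by simp [hB]; linarith
  intro n
  induction n using Nat.strong_induction_on with
  | _ n ih =>
    match n with
    | 0 =>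
      have h0 : co a b c 0 = (a, b, c) := by rw [co]
      refine ⟨?_, ?_, ?_⟩ <;> rw [h0] <;>
        simp only [pow_zero, mul_one, hA, hr] <;>
        [ show ‖a‖ ≤ ‖a‖ + ‖b‖ + ‖c‖ + 1;
          show ‖b‖ ≤ ‖a‖ + ‖b‖ + ‖c‖ + 1;
          show ‖c‖ ≤ ‖a‖ + ‖b‖ + ‖c‖ + 1] <;>
        linarith [norm_nonneg a, norm_nonneg b, norm_nonneg c]
    | (m + 1) =>
      have ihm := ih m (Nat.lt_succ_self m)
      have hBn : (0:ℝ) < B ^ m := pow_pos hB0 m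
      have hm1 : (1:ℝ) ≤ (m : ℝ) + 1 := by
        have := Nat.cast_nonneg (α := ℝ) m; linarith
      have hnc : ‖((m : ℂ) + 1)‖ = (m : ℝ) + 1 := by
        rw [show ((m : ℂ) + 1) = ((m + 1 : ℕ) : ℂ) by push_cast; ring,
          Complex.norm_natCast]
        push_cast; ring
      -- convolution bounds
      have hconv : ∀ f g : ℕ → ℂ, (∀ i, i ≤ m → ‖f i‖ ≤ A * B ^ i) →
          (∀ j, j ≤ m → ‖g j‖ ≤ A * B ^ j) →
          ‖∑ p ∈ antidiagonal m, f p.1 * g p.2‖ ≤ ((m : ℝ) + 1) * (A * A * B ^ m) := by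
        intro f g hf hg
        calc ‖∑ p ∈ antidiagonal m, f p.1 * g p.2‖
            ≤ ∑ p ∈ antidiagonal m, ‖f p.1 * g p.2‖ := norm_sum_le _ _
          _ ≤ ∑ p ∈ antidiagonal m, A * A * B ^ m := by
              apply Finset.sum_le_sum
              intro p hp
              have hpm := Finset.HasAntidiagonal.mem_antidiagonal.mp hp
              have h1 : ‖f p.1‖ ≤ A * B ^ p.1 := hf _ (by omega)
              have h2 : ‖g p.2‖ ≤ A * B ^ p.2 := hg _ (by omega)
              calc ‖f p.1 * g p.2‖ = ‖f p.1‖ * ‖g p.2‖ := norm_mul _ _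
                _ ≤ (A * B ^ p.1) * (A * B ^ p.2) := by
                    apply mul_le_mul h1 h2 (norm_nonneg _)
                    positivity
                _ = A * A * B ^ m := by rw [← hpm, pow_add]; ring
          _ = ((m : ℝ) + 1) * (A * A * B ^ m) := by
              rw [Finset.sum_const, Finset.Nat.card_antidiagonal]
              push_cast; ring
      have hXm : ∀ i, i ≤ m → ‖(co a b c i).1‖ ≤ A * B ^ i := fun i hi =>
        (ih i (by omega)).1
      have hYm : ∀ i, i ≤ m → ‖(co a b c i).2.1‖ ≤ A * B ^ i := fun i hi =>
        (ih i (by omega)).2.1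
      have hZm : ∀ i, i ≤ m → ‖(co a b c i).2.2‖ ≤ A * B ^ i := fun i hi =>
        (ih i (by omega)).2.2
      refine ⟨?_, ?_, ?_⟩
      · -- X
        have h := congrArg norm (co_X_succ a b c m)
        rw [norm_mul, hnc] at h
        have hle : ((m:ℝ) + 1) * ‖(co a b c (m+1)).1‖ ≤ 20 * (A * B ^ m) := by
          rw [h]
          calc ‖(10 : ℂ) * ((co a b c m).2.1 - (co a b c m).1)‖
              = 10 * ‖(co a b c m).2.1 - (co a b c m).1‖ := by
                rw [norm_mul]; norm_num
            _ ≤ 10 * (‖(co a b c m).2.1‖ + ‖(co a b c m).1‖) := by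
                have := norm_sub_le (co a b c m).2.1 (co a b c m).1
                linarith
            _ ≤ 20 * (A * B ^ m) := by
                have := ihm.1; have := ihm.2.1; linarith
        have h20 : 20 * (A * B ^ m) ≤ A * B ^ (m+1) := by
          rw [pow_succ]
          have : 20 * (A * B ^ m) ≤ (A * B ^ m) * B := by
            have : (0:ℝ) < A * B ^ m := by positivity
            nlinarith [this]
          linarith
        nlinarith [norm_nonneg ((co a b c (m+1)).1)]
      · -- Y
        have h := congrArg norm (co_Y_succ a b c m)
        rw [norm_mul, hnc] at h
        have hC := hconv (fun i => (co a b c i).1) (fun j => (co a b c j).2.2) hXm hZm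
        have hC' : ‖∑ p ∈ antidiagonal m, (co a b c p.1).1 * (co a b c p.2).2.2‖ ≤
            ((m:ℝ) + 1) * (A * A * B ^ m) := hC
        have hle : ((m:ℝ) + 1) * ‖(co a b c (m+1)).2.1‖ ≤
            29 * (A * B ^ m) + ((m:ℝ) + 1) * (A * A * B ^ m) := by
          rw [h]
          have t1 : ‖(28:ℂ) * (co a b c m).1 - (co a b c m).2.1 -
              ∑ p ∈ antidiagonal m, (co a b c p.1).1 * (co a b c p.2).2.2‖ ≤
              ‖(28:ℂ) * (co a b c m).1‖ + ‖(co a b c m).2.1‖ +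
              ‖∑ p ∈ antidiagonal m, (co a b c p.1).1 * (co a b c p.2).2.2‖ := by
            calc _ ≤ ‖(28:ℂ) * (co a b c m).1 - (co a b c m).2.1‖ + _ := norm_sub_le _ _
              _ ≤ _ := by have := norm_sub_le ((28:ℂ) * (co a b c m).1) (co a b c m).2.1; linarith
          have t2 : ‖(28:ℂ) * (co a b c m).1‖ ≤ 28 * (A * B ^ m) := by
            rw [norm_mul]
            have := ihm.1
            have : ‖(co a b c m).1‖ ≤ A * B ^ m := this
            have h28 : ‖(28:ℂ)‖ = 28 := by norm_num
            rw [h28]; linarith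
          have t3 := ihm.2.1
          linarith
        have hgoal : 29 * (A * B ^ m) + ((m:ℝ) + 1) * (A * A * B ^ m) ≤
            ((m:ℝ) + 1) * (A * B ^ (m+1)) := by
          rw [pow_succ]
          have hAB : 29 + A ≤ B := by simp [hA, hB]; linarith
          have e1 : 29 * (A * B ^ m) ≤ ((m:ℝ)+1) * (29 * (A * B ^ m)) := by
            nlinarith [mul_pos hA0 hBn]
          have e2 : ((m:ℝ)+1) * (29 * (A * B ^ m)) + ((m:ℝ) + 1) * (A * A * B ^ m) =
              ((m:ℝ)+1) * ((29 + A) * (A * B ^ m)) := by ring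
          have e3 : (29 + A) * (A * B ^ m) ≤ B * (A * B ^ m) := by
            nlinarith [mul_pos hA0 hBn]
          nlinarith [hm1]
        nlinarith [norm_nonneg ((co a b c (m+1)).2.1)]
      · -- Z
        have h := congrArg norm (co_Z_succ a b c m)
        rw [norm_mul, hnc] at h
        have hC := hconv (fun i => (co a b c i).1) (fun j => (co a b c j).2.1) hXm hYm
        have hC' : ‖∑ p ∈ antidiagonal m, (co a b c p.1).1 * (co a b c p.2).2.1‖ ≤
            ((m:ℝ) + 1) * (A * A * B ^ m) := hC
        have hle : ((m:ℝ) + 1) * ‖(co a b c (m+1)).2.2‖ ≤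
            3 * (A * B ^ m) + ((m:ℝ) + 1) * (A * A * B ^ m) := by
          rw [h]
          have t1 : ‖(-(8/3):ℂ) * (co a b c m).2.2 +
              ∑ p ∈ antidiagonal m, (co a b c p.1).1 * (co a b c p.2).2.1‖ ≤
              ‖(-(8/3):ℂ) * (co a b c m).2.2‖ +
              ‖∑ p ∈ antidiagonal m, (co a b c p.1).1 * (co a b c p.2).2.1‖ :=
            norm_add_le _ _
          have t2 : ‖(-(8/3):ℂ) * (co a b c m).2.2‖ ≤ 3 * (A * B ^ m) := by
            rw [norm_mul]
            have h83 : ‖(-(8/3):ℂ)‖ = 8/3 := by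
              rw [norm_neg, norm_div]
              simp [Complex.norm_ofNat]
            rw [h83]
            have := ihm.2.2
            nlinarith [norm_nonneg ((co a b c m).2.2)]
          exact t1.trans (add_le_add t2 hC')
        have hgoal : 3 * (A * B ^ m) + ((m:ℝ) + 1) * (A * A * B ^ m) ≤
            ((m:ℝ) + 1) * (A * B ^ (m+1)) := by
          rw [pow_succ]
          have hAB : 3 + A ≤ B := by simp [hA, hB]; linarith
          have e1 : 3 * (A * B ^ m) ≤ ((m:ℝ)+1) * (3 * (A * B ^ m)) := by
            nlinarith [mul_pos hA0 hBn]
          have e3 : (3 + A) * (A * B ^ m) ≤ B * (A * B ^ m) := by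
            nlinarith [mul_pos hA0 hBn]
          nlinarith [hm1]
        nlinarith [norm_nonneg ((co a b c (m+1)).2.2)]

lemma summable_aux {f : ℕ → ℂ} {A B : ℝ} (hA : 0 ≤ A) (hB : 0 < B)
    (hf : ∀ n, ‖f n‖ ≤ A * B ^ n) {w : ℂ} (hw : ‖w‖ < 1 / B) :
    Summable fun n => ‖f n * w ^ n‖ := by
  have hq0 : 0 ≤ B * ‖w‖ := by positivity
  have hq1 : B * ‖w‖ < 1 := by
    have h := (lt_div_iff₀ hB).mp hw
    linarith [h, mul_comm (‖w‖) B]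
  refine Summable.of_nonneg_of_le (fun n => norm_nonneg _) (fun n => ?_)
    ((summable_geometric_of_lt_one hq0 hq1).mul_left A)
  rw [norm_mul, norm_pow, mul_pow]
  calc ‖f n‖ * ‖w‖ ^ n ≤ (A * B ^ n) * ‖w‖ ^ n := by
        apply mul_le_mul_of_nonneg_right (hf n) (by positivity)
    _ = A * (B ^ n * ‖w‖ ^ n) := by ring

lemma hasDerivAt_series (f : ℕ → ℂ) {A B : ℝ} (hA : 0 ≤ A) (hB : 0 < B)
    (hf : ∀ n, ‖f n‖ ≤ A * B ^ n) (t₀ t : ℂ) (ht : ‖t - t₀‖ < 1 / B) :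
    HasDerivAt (fun u => ∑' n, f n * (u - t₀) ^ n)
      (∑' n : ℕ, ((n : ℂ) + 1) * f (n + 1) * (t - t₀) ^ n) t := by
  set ρ : ℝ := (‖t - t₀‖ + 1 / B) / 2 with hρ
  have h1B : 0 < 1 / B := by positivity
  have hρ0 : 0 < ρ := by positivity
  have htρ : ‖t - t₀‖ < ρ := by rw [hρ]; linarith
  have hρB : ρ < 1 / B := by rw [hρ]; linarith
  set q : ℝ := B * ρ with hq
  have hq0 : 0 ≤ q := by positivity
  have hq1 : q < 1 := by
    rw [hq]
    calc B * ρ < B * (1 / B) := by exact mul_lt_mul_of_pos_left hρB hB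
      _ = 1 := mul_one_div_cancel (ne_of_gt hB)
  set u : ℕ → ℝ := fun n => A * B ^ n * ((n : ℝ) * ρ ^ (n - 1)) with hu_def
  have hu : Summable u := by
    rw [← summable_nat_add_iff 1]
    have he : (fun n : ℕ => u (n + 1)) = fun n : ℕ => (A * B) * (((n : ℝ) + 1) * q ^ n) := by
      funext n
      simp only [hu_def, hq, Nat.add_sub_cancel, mul_pow]
      push_cast
      ring
    rw [he]
    apply Summable.mul_left
    have h2 : Summable fun n : ℕ => (n : ℝ) ^ 1 * q ^ n :=
      summable_pow_mul_geometric_of_norm_lt_one 1 (by rwa [Real.norm_eq_abs, abs_of_nonneg hq0])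
    have h3 : Summable fun n : ℕ => q ^ n := summable_geometric_of_lt_one hq0 hq1
    apply (h2.add h3).congr
    intro n; simp [pow_one]; ring
  set g' : ℕ → ℂ → ℂ := fun n y => f n * ((n : ℂ) * (y - t₀) ^ (n - 1)) with hg'_def
  have hderiv : ∀ n : ℕ, ∀ y ∈ Metric.ball t₀ ρ,
      HasDerivAt (fun u => f n * (u - t₀) ^ n) (g' n y) y := by
    intro n y _
    have h1 : HasDerivAt (fun u : ℂ => (u - t₀) ^ n)
        ((n : ℂ) * (y - t₀) ^ (n - 1) * 1) y := ((hasDerivAt_id y).sub_const t₀).pow n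
    have := h1.const_mul (f n)
    simpa [hg'_def, mul_one] using this
  have hbound : ∀ n : ℕ, ∀ y ∈ Metric.ball t₀ ρ, ‖g' n y‖ ≤ u n := by
    intro n y hy
    have hyρ : ‖y - t₀‖ ≤ ρ := le_of_lt (by rwa [Metric.mem_ball, dist_eq_norm] at hy)
    simp only [hg'_def, hu_def, norm_mul, Complex.norm_natCast, norm_pow]
    have h1 : ‖y - t₀‖ ^ (n - 1) ≤ ρ ^ (n - 1) := pow_le_pow_left₀ (norm_nonneg _) hyρ _
    have h2 : ‖f n‖ * ((n : ℝ) * ‖y - t₀‖ ^ (n - 1)) ≤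
        (A * B ^ n) * ((n : ℝ) * ρ ^ (n - 1)) := by
      apply mul_le_mul (hf n) _ (by positivity) (by positivity)
      exact mul_le_mul_of_nonneg_left h1 (Nat.cast_nonneg n)
    linarith
  have hsum0 : Summable fun n => f n * (t₀ - t₀) ^ n := by
    apply summable_of_ne_finset_zero (s := {0})
    intro n hn
    simp only [Finset.mem_singleton] at hn
    simp [sub_self, zero_pow hn]
  have key := hasDerivAt_tsum_of_isPreconnected hu Metric.isOpen_ball
    (convex_ball t₀ ρ).isPreconnected hderiv hbound
    (Metric.mem_ball_self hρ0) hsum0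
    (by rwa [Metric.mem_ball, dist_eq_norm])
  have hsum' : Summable fun n => g' n t :=
    Summable.of_norm_bounded hu (fun n => hbound n t (by rwa [Metric.mem_ball, dist_eq_norm]))
  have heq : ∑' n, g' n t = ∑' n : ℕ, ((n : ℂ) + 1) * f (n + 1) * (t - t₀) ^ n := by
    rw [Summable.tsum_eq_zero_add hsum']
    have h0 : g' 0 t = 0 := by simp [hg'_def]
    rw [h0, zero_add]
    apply tsum_congr
    intro n
    simp only [hg'_def, Nat.add_sub_cancel]
    push_cast
    ring
  rw [← heq]
  exact key

noncomputable def coX (a b c : ℂ) (n : ℕ) : ℂ := (co a b c n).1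
noncomputable def coY (a b c : ℂ) (n : ℕ) : ℂ := (co a b c n).2.1
noncomputable def coZ (a b c : ℂ) (n : ℕ) : ℂ := (co a b c n).2.2

lemma coX_succ (n : ℕ) : ((n : ℂ) + 1) * coX a b c (n+1) =
    10 * (coY a b c n - coX a b c n) := co_X_succ a b c n

lemma coY_succ (n : ℕ) : ((n : ℂ) + 1) * coY a b c (n+1) =
    28 * coX a b c n - coY a b c n -
      ∑ p ∈ antidiagonal n, coX a b c p.1 * coZ a b c p.2 := co_Y_succ a b c n

lemma coZ_succ (n : ℕ) : ((n : ℂ) + 1) * coZ a b c (n+1) =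
    (-(8 / 3)) * coZ a b c n +
      ∑ p ∈ antidiagonal n, coX a b c p.1 * coY a b c p.2 := co_Z_succ a b c n

lemma coX_bound (n : ℕ) :
    ‖coX a b c n‖ ≤ (‖a‖ + ‖b‖ + ‖c‖ + 1) * (104 + 8 * (‖a‖ + ‖b‖ + ‖c‖)) ^ n :=
  (co_bound a b c n).1
lemma coY_bound (n : ℕ) :
    ‖coY a b c n‖ ≤ (‖a‖ + ‖b‖ + ‖c‖ + 1) * (104 + 8 * (‖a‖ + ‖b‖ + ‖c‖)) ^ n :=
  (co_bound a b c n).2.1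
lemma coZ_bound (n : ℕ) :
    ‖coZ a b c n‖ ≤ (‖a‖ + ‖b‖ + ‖c‖ + 1) * (104 + 8 * (‖a‖ + ‖b‖ + ‖c‖)) ^ n :=
  (co_bound a b c n).2.2

lemma coX_zero : coX a b c 0 = a := by rw [coX, co]
lemma coY_zero : coY a b c 0 = b := by rw [coY, co]
lemma coZ_zero : coZ a b c 0 = c := by rw [coZ, co]

lemma cauchy_aux {f g : ℕ → ℂ} {w : ℂ}
    (hf : Summable fun n => ‖f n * w ^ n‖) (hg : Summable fun n => ‖g n * w ^ n‖) :
    ((∑' n : ℕ, f n * w ^ n) * ∑' n : ℕ, g n * w ^ n) =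
      (∑' n : ℕ, (∑ kl ∈ antidiagonal n, f kl.1 * g kl.2) * w ^ n) ∧
    Summable fun n : ℕ => (∑ kl ∈ antidiagonal n, f kl.1 * g kl.2) * w ^ n := by
  have hid : ∀ n : ℕ, (∑ kl ∈ antidiagonal n, (f kl.1 * w ^ kl.1) * (g kl.2 * w ^ kl.2)) =
      (∑ kl ∈ antidiagonal n, f kl.1 * g kl.2) * w ^ n := by
    intro n
    rw [Finset.sum_mul]
    apply Finset.sum_congr rfl
    intro p hp
    rw [← Finset.HasAntidiagonal.mem_antidiagonal.mp hp, pow_add]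
    ring
  constructor
  · rw [tsum_mul_tsum_eq_tsum_sum_antidiagonal_of_summable_norm hf hg]
    exact tsum_congr hid
  · exact ((summable_norm_sum_mul_antidiagonal_of_summable_norm hf hg).of_norm).congr hid

/-- Given `t₀ ∈ ℂ` and `(a, b, c) ∈ ℂ³`, set `r = |a| + |b| + |c|` and
`R = 1 / (104 + 8 r)`. Then there is a solution of the complex Lorenz system on the
open ball of radius `R` about `t₀` with values `(a, b, c)` at `t₀`. -/
theorem lorenz_local_complex_solution (t₀ : ℂ) (a b c : ℂ) :
    ∃ x y z : ℂ → ℂ,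
      LorenzSystemC x y z
        (Metric.ball t₀ (1 / (104 + 8 * (‖a‖ + ‖b‖ + ‖c‖)))) ∧
      x t₀ = a ∧ y t₀ = b ∧ z t₀ = c := by
  have hA0 : (0:ℝ) ≤ ‖a‖ + ‖b‖ + ‖c‖ + 1 := by positivity
  have hB0 : (0:ℝ) < 104 + 8 * (‖a‖ + ‖b‖ + ‖c‖) := by positivity
  refine ⟨fun t => ∑' n : ℕ, coX a b c n * (t - t₀) ^ n,
    fun t => ∑' n : ℕ, coY a b c n * (t - t₀) ^ n,
    fun t => ∑' n : ℕ, coZ a b c n * (t - t₀) ^ n, ?_, ?_, ?_, ?_⟩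
  · intro t ht
    have htB : ‖t - t₀‖ < 1 / (104 + 8 * (‖a‖ + ‖b‖ + ‖c‖)) := by
      rw [Metric.mem_ball, dist_eq_norm] at ht
      exact ht
    have hsX : Summable fun n => ‖coX a b c n * (t - t₀) ^ n‖ :=
      summable_aux hA0 hB0 (coX_bound a b c) htB
    have hsY : Summable fun n => ‖coY a b c n * (t - t₀) ^ n‖ :=
      summable_aux hA0 hB0 (coY_bound a b c) htB
    have hsZ : Summable fun n => ‖coZ a b c n * (t - t₀) ^ n‖ :=
      summable_aux hA0 hB0 (coZ_bound a b c) htB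
    refine ⟨?_, ?_, ?_⟩
    · have hd := hasDerivAt_series (coX a b c) hA0 hB0 (coX_bound a b c) t₀ t htB
      have he : (∑' n : ℕ, ((n:ℂ) + 1) * coX a b c (n+1) * (t - t₀) ^ n) =
          10 * ((∑' n : ℕ, coY a b c n * (t - t₀) ^ n) -
            ∑' n : ℕ, coX a b c n * (t - t₀) ^ n) := by
        calc ∑' n : ℕ, ((n:ℂ) + 1) * coX a b c (n+1) * (t - t₀) ^ n
            = ∑' n : ℕ, (10 * (coY a b c n * (t - t₀) ^ n) -
                10 * (coX a b c n * (t - t₀) ^ n)) := by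
              apply tsum_congr; intro n
              have h := coX_succ a b c n
              calc ((n:ℂ) + 1) * coX a b c (n+1) * (t - t₀) ^ n
                  = (((n:ℂ) + 1) * coX a b c (n+1)) * (t - t₀) ^ n := by ring
                _ = (10 * (coY a b c n - coX a b c n)) * (t - t₀) ^ n := by rw [h]
                _ = _ := by ring
          _ = (∑' n : ℕ, 10 * (coY a b c n * (t - t₀) ^ n)) -
              ∑' n : ℕ, 10 * (coX a b c n * (t - t₀) ^ n) :=
            Summable.tsum_sub (hsY.of_norm.mul_left 10) (hsX.of_norm.mul_left 10)
          _ = _ := by rw [tsum_mul_left, tsum_mul_left]; ring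
      exact he ▸ hd
    · have hd := hasDerivAt_series (coY a b c) hA0 hB0 (coY_bound a b c) t₀ t htB
      obtain ⟨hca, hcs⟩ := cauchy_aux hsX hsZ
      have he : (∑' n : ℕ, ((n:ℂ) + 1) * coY a b c (n+1) * (t - t₀) ^ n) =
          28 * (∑' n : ℕ, coX a b c n * (t - t₀) ^ n) -
            (∑' n : ℕ, coY a b c n * (t - t₀) ^ n) -
            (∑' n : ℕ, coX a b c n * (t - t₀) ^ n) *
              ∑' n : ℕ, coZ a b c n * (t - t₀) ^ n := by
        calc ∑' n : ℕ, ((n:ℂ) + 1) * coY a b c (n+1) * (t - t₀) ^ n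
            = ∑' n : ℕ, ((28 * (coX a b c n * (t - t₀) ^ n) -
                coY a b c n * (t - t₀) ^ n) -
                (∑ kl ∈ antidiagonal n, coX a b c kl.1 * coZ a b c kl.2) * (t - t₀) ^ n) := by
              apply tsum_congr; intro n
              have h := coY_succ a b c n
              calc ((n:ℂ) + 1) * coY a b c (n+1) * (t - t₀) ^ n
                  = (((n:ℂ) + 1) * coY a b c (n+1)) * (t - t₀) ^ n := by ring
                _ = (28 * coX a b c n - coY a b c n -
                    ∑ kl ∈ antidiagonal n, coX a b c kl.1 * coZ a b c kl.2) *
                      (t - t₀) ^ n := by rw [h]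
                _ = _ := by ring
          _ = (∑' n : ℕ, (28 * (coX a b c n * (t - t₀) ^ n) - coY a b c n * (t - t₀) ^ n)) -
              ∑' n : ℕ, (∑ kl ∈ antidiagonal n, coX a b c kl.1 * coZ a b c kl.2) *
                (t - t₀) ^ n :=
            Summable.tsum_sub ((hsX.of_norm.mul_left 28).sub hsY.of_norm) hcs
          _ = _ := by
            rw [Summable.tsum_sub (hsX.of_norm.mul_left 28) hsY.of_norm, tsum_mul_left, ← hca]
      exact he ▸ hd
    · have hd := hasDerivAt_series (coZ a b c) hA0 hB0 (coZ_bound a b c) t₀ t htB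
      obtain ⟨hca, hcs⟩ := cauchy_aux hsX hsY
      have he : (∑' n : ℕ, ((n:ℂ) + 1) * coZ a b c (n+1) * (t - t₀) ^ n) =
          (-(8/3)) * (∑' n : ℕ, coZ a b c n * (t - t₀) ^ n) +
            (∑' n : ℕ, coX a b c n * (t - t₀) ^ n) *
              ∑' n : ℕ, coY a b c n * (t - t₀) ^ n := by
        calc ∑' n : ℕ, ((n:ℂ) + 1) * coZ a b c (n+1) * (t - t₀) ^ n
            = ∑' n : ℕ, ((-(8/3)) * (coZ a b c n * (t - t₀) ^ n) +
                (∑ kl ∈ antidiagonal n, coX a b c kl.1 * coY a b c kl.2) * (t - t₀) ^ n) := by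
              apply tsum_congr; intro n
              have h := coZ_succ a b c n
              calc ((n:ℂ) + 1) * coZ a b c (n+1) * (t - t₀) ^ n
                  = (((n:ℂ) + 1) * coZ a b c (n+1)) * (t - t₀) ^ n := by ring
                _ = ((-(8/3)) * coZ a b c n +
                    ∑ kl ∈ antidiagonal n, coX a b c kl.1 * coY a b c kl.2) *
                      (t - t₀) ^ n := by rw [h]
                _ = _ := by ring
          _ = (∑' n : ℕ, (-(8/3)) * (coZ a b c n * (t - t₀) ^ n)) +
              ∑' n : ℕ, (∑ kl ∈ antidiagonal n, coX a b c kl.1 * coY a b c kl.2) *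
                (t - t₀) ^ n :=
            Summable.tsum_add (hsZ.of_norm.mul_left (-(8/3))) hcs
          _ = _ := by rw [tsum_mul_left, ← hca]
      exact he ▸ hd
  · show (∑' n : ℕ, coX a b c n * (t₀ - t₀) ^ n) = a
    rw [tsum_eq_single 0 (fun n hn => by simp [sub_self, zero_pow hn])]
    simp [coX_zero]
  · show (∑' n : ℕ, coY a b c n * (t₀ - t₀) ^ n) = b
    rw [tsum_eq_single 0 (fun n hn => by simp [sub_self, zero_pow hn])]
    simp [coY_zero]
  · show (∑' n : ℕ, coZ a b c n * (t₀ - t₀) ^ n) = c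
    rw [tsum_eq_single 0 (fun n hn => by simp [sub_self, zero_pow hn])]
    simp [coZ_zero]
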